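/- arXiv:math-ph/0007034 — 3 statements merged into one kernel-verified Lean document; each statement's English description precedes it below -/
import Mathlib

section
/- Let Ω ⊆ ℂ be open, let a, b, U be smooth real-valued functions on Ω, let h be a smooth positive real-valued function on Ω, and let L ψ = -h²[(∂ₓ - ia)²ψ + (∂_y - ib)²ψ] + Uψ. Then there exist smooth functions α₁, α₀, α₁*, α₀* : Ω → ℂ such that Lψ = (α₁∂ + α₀)((α₁*∂̄ + α₀*)ψ) for every smooth ψ : Ω → ℂ if and only if U = -B, where B = h²(∂ₓb - ∂_y a). -/
open Complex ComplexConjugate MeasureTheory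

noncomputable section

/-- Partial derivative in the x-direction (identifying ℂ with ℝ²). -/
def pdx (f : ℂ → ℂ) (z : ℂ) : ℂ := fderiv ℝ f z 1

/-- Partial derivative in the y-direction. -/
def pdy (f : ℂ → ℂ) (z : ℂ) : ℂ := fderiv ℝ f z Complex.I

/-- Wirtinger derivative ∂ = (∂ₓ - i ∂_y)/2. -/
def wd (f : ℂ → ℂ) (z : ℂ) : ℂ := (pdx f z - Complex.I * pdy f z) / 2

/-- Wirtinger derivative ∂̄ = (∂ₓ + i ∂_y)/2. -/
def wdb (f : ℂ → ℂ) (z : ℂ) : ℂ := (pdx f z + Complex.I * pdy f z) / 2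

/-- x-derivative of a real-valued function. -/
def pdxR (f : ℂ → ℝ) (z : ℂ) : ℝ := fderiv ℝ f z 1

/-- y-derivative of a real-valued function. -/
def pdyR (f : ℂ → ℝ) (z : ℂ) : ℝ := fderiv ℝ f z Complex.I

/-- Magnetic field B = h²(∂ₓ b - ∂_y a). -/
def Bf (a b h : ℂ → ℝ) (z : ℂ) : ℝ := (h z)^2 * (pdxR b z - pdyR a z)

/-- Covariant derivative ∇ψ = ∂ψ - iAψ with A = (a - ib)/2. -/
def cd (a b : ℂ → ℝ) (ψ : ℂ → ℂ) (z : ℂ) : ℂ :=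
  wd ψ z - Complex.I * (((a z : ℂ) - Complex.I * (b z : ℂ)) / 2) * ψ z

/-- Covariant derivative ∇̄ψ = ∂̄ψ - iĀψ with Ā = (a + ib)/2. -/
def cdb (a b : ℂ → ℝ) (ψ : ℂ → ℂ) (z : ℂ) : ℂ :=
  wdb ψ z - Complex.I * (((a z : ℂ) + Complex.I * (b z : ℂ)) / 2) * ψ z

/-- Magnetic covariant x-derivative ∇ₓψ = ∂ₓψ - iaψ. -/
def cdx (a : ℂ → ℝ) (ψ : ℂ → ℂ) (z : ℂ) : ℂ := pdx ψ z - Complex.I * (a z : ℂ) * ψ z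

/-- Magnetic covariant y-derivative ∇_yψ = ∂_yψ - ibψ. -/
def cdy (b : ℂ → ℝ) (ψ : ℂ → ℂ) (z : ℂ) : ℂ := pdy ψ z - Complex.I * (b z : ℂ) * ψ z

/-- The Schrödinger operator L ψ = -h²[(∂ₓ - ia)²ψ + (∂_y - ib)²ψ] + Uψ. -/
def LSch (a b h U : ℂ → ℝ) (ψ : ℂ → ℂ) (z : ℂ) : ℂ :=
  -(h z : ℂ)^2 * (cdx a (cdx a ψ) z + cdy b (cdy b ψ) z) + (U z : ℂ) * ψ z

/-! ### Auxiliary lemmas -/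

lemma fda_add {f g : ℂ → ℂ} {z : ℂ} (hf : DifferentiableAt ℝ f z)
    (hg : DifferentiableAt ℝ g z) (v : ℂ) :
    fderiv ℝ (fun w => f w + g w) z v = fderiv ℝ f z v + fderiv ℝ g z v := by
  rw [fderiv_fun_add hf hg]; simp

lemma fda_sub {f g : ℂ → ℂ} {z : ℂ} (hf : DifferentiableAt ℝ f z)
    (hg : DifferentiableAt ℝ g z) (v : ℂ) :
    fderiv ℝ (fun w => f w - g w) z v = fderiv ℝ f z v - fderiv ℝ g z v := by
  rw [fderiv_fun_sub hf hg]; simp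

lemma fda_mul {f g : ℂ → ℂ} {z : ℂ} (hf : DifferentiableAt ℝ f z)
    (hg : DifferentiableAt ℝ g z) (v : ℂ) :
    fderiv ℝ (fun w => f w * g w) z v = fderiv ℝ f z v * g z + f z * fderiv ℝ g z v := by
  rw [fderiv_fun_mul hf hg]; simp [smul_eq_mul]; ring

lemma fda_const_mul {g : ℂ → ℂ} {z : ℂ} (hg : DifferentiableAt ℝ g z) (c v : ℂ) :
    fderiv ℝ (fun w => c * g w) z v = c * fderiv ℝ g z v := by
  rw [fderiv_const_mul hg]; simp

lemma fda_const (c : ℂ) (z v : ℂ) : fderiv ℝ (fun _ => c) z v = 0 := by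
  simp

lemma diff_ofReal {α : ℂ → ℝ} {z : ℂ} (hα : DifferentiableAt ℝ α z) :
    DifferentiableAt ℝ (fun w => (α w : ℂ)) z :=
  Complex.ofRealCLM.differentiable.differentiableAt.comp z hα

lemma fda_ofReal {α : ℂ → ℝ} {z : ℂ} (hα : DifferentiableAt ℝ α z) (v : ℂ) :
    fderiv ℝ (fun w => (α w : ℂ)) z v = (fderiv ℝ α z v : ℂ) := by
  have h1 : HasFDerivAt (fun w => (α w : ℂ)) (Complex.ofRealCLM.comp (fderiv ℝ α z)) z :=
    Complex.ofRealCLM.hasFDerivAt.comp z hα.hasFDerivAt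
  rw [h1.fderiv]; rfl

lemma top_le : ((⊤:ℕ∞) : WithTop ℕ∞) ≠ 0 := by simp

lemma diff_fderiv {ψ : ℂ → ℂ} {z : ℂ} (hψ : ContDiffAt ℝ ((⊤:ℕ∞) : WithTop ℕ∞) ψ z) :
    DifferentiableAt ℝ (fderiv ℝ ψ) z := by
  have h1 := hψ.fderiv_right (m := ((⊤:ℕ∞) : WithTop ℕ∞)) (by norm_num)
  exact h1.differentiableAt top_le

lemma diff_pd {ψ : ℂ → ℂ} {z : ℂ} (hψ : ContDiffAt ℝ ((⊤:ℕ∞) : WithTop ℕ∞) ψ z) (c : ℂ) :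
    DifferentiableAt ℝ (fun w => fderiv ℝ ψ w c) z :=
  ((ContinuousLinearMap.apply ℝ ℂ c).hasFDerivAt.comp z
    (diff_fderiv hψ).hasFDerivAt).differentiableAt

lemma fda_pd {ψ : ℂ → ℂ} {z : ℂ} (hψ : ContDiffAt ℝ ((⊤:ℕ∞) : WithTop ℕ∞) ψ z) (c v : ℂ) :
    fderiv ℝ (fun w => fderiv ℝ ψ w c) z v = fderiv ℝ (fderiv ℝ ψ) z v c := by
  have h1 : HasFDerivAt (fun w => fderiv ℝ ψ w c)
      ((ContinuousLinearMap.apply ℝ ℂ c).comp (fderiv ℝ (fderiv ℝ ψ) z)) z :=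
    (ContinuousLinearMap.apply ℝ ℂ c).hasFDerivAt.comp z (diff_fderiv hψ).hasFDerivAt
  rw [h1.fderiv]; rfl

lemma snd_symm {ψ : ℂ → ℂ} {z : ℂ} (hψ : ContDiffAt ℝ ((⊤:ℕ∞) : WithTop ℕ∞) ψ z) :
    fderiv ℝ (fderiv ℝ ψ) z 1 Complex.I = fderiv ℝ (fderiv ℝ ψ) z Complex.I 1 :=
  hψ.isSymmSndFDerivAt (by simp; exact WithTop.coe_le_coe.mpr (le_top : (2:ℕ∞) ≤ ⊤)) 1 Complex.I

lemma cdx_fun (a : ℂ → ℝ) (ψ : ℂ → ℂ) :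
    cdx a ψ = fun w => (fun w => fderiv ℝ ψ w 1) w - (fun w => Complex.I * (a w:ℂ)) w * ψ w := by
  funext w; simp [cdx, pdx]

lemma cdxcdx_eq {a : ℂ → ℝ} {ψ : ℂ → ℂ} {z : ℂ} (ha : DifferentiableAt ℝ a z)
    (hψ : ContDiffAt ℝ ((⊤:ℕ∞) : WithTop ℕ∞) ψ z) :
    cdx a (cdx a ψ) z = fderiv ℝ (fderiv ℝ ψ) z 1 1
      - Complex.I * ((pdxR a z : ℂ) * ψ z + (a z : ℂ) * pdx ψ z)
      - Complex.I * (a z : ℂ) * (pdx ψ z - Complex.I * (a z : ℂ) * ψ z) := by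
  have hψd : DifferentiableAt ℝ ψ z := hψ.differentiableAt top_le
  have hca : DifferentiableAt ℝ (fun w => Complex.I * (a w:ℂ)) z := (diff_ofReal ha).const_mul _
  have h1 : cdx a (cdx a ψ) z = fderiv ℝ (cdx a ψ) z 1
      - Complex.I * (a z : ℂ) * (pdx ψ z - Complex.I * (a z : ℂ) * ψ z) := rfl
  rw [h1, cdx_fun, fda_sub (diff_pd hψ 1) (hca.fun_mul hψd),
    fda_mul hca hψd, fda_pd hψ 1 1, fda_const_mul (diff_ofReal ha), fda_ofReal ha]
  simp only [pdx, pdxR]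
  ring

lemma cdy_fun (b : ℂ → ℝ) (ψ : ℂ → ℂ) :
    cdy b ψ = fun w => (fun w => fderiv ℝ ψ w Complex.I) w
      - (fun w => Complex.I * (b w:ℂ)) w * ψ w := by
  funext w; simp [cdy, pdy]

lemma cdycdy_eq {b : ℂ → ℝ} {ψ : ℂ → ℂ} {z : ℂ} (hb : DifferentiableAt ℝ b z)
    (hψ : ContDiffAt ℝ ((⊤:ℕ∞) : WithTop ℕ∞) ψ z) :
    cdy b (cdy b ψ) z = fderiv ℝ (fderiv ℝ ψ) z Complex.I Complex.I
      - Complex.I * ((pdyR b z : ℂ) * ψ z + (b z : ℂ) * pdy ψ z)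
      - Complex.I * (b z : ℂ) * (pdy ψ z - Complex.I * (b z : ℂ) * ψ z) := by
  have hψd : DifferentiableAt ℝ ψ z := hψ.differentiableAt top_le
  have hcb : DifferentiableAt ℝ (fun w => Complex.I * (b w:ℂ)) z := (diff_ofReal hb).const_mul _
  have h1 : cdy b (cdy b ψ) z = fderiv ℝ (cdy b ψ) z Complex.I
      - Complex.I * (b z : ℂ) * (pdy ψ z - Complex.I * (b z : ℂ) * ψ z) := rfl
  rw [h1, cdy_fun, fda_sub (diff_pd hψ Complex.I) (hcb.fun_mul hψd),
    fda_mul hcb hψd, fda_pd hψ Complex.I Complex.I, fda_const_mul (diff_ofReal hb),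
    fda_ofReal hb]
  simp only [pdy, pdyR]
  ring

lemma diff_wdb {ψ : ℂ → ℂ} {z : ℂ} (hψ : ContDiffAt ℝ ((⊤:ℕ∞) : WithTop ℕ∞) ψ z) :
    DifferentiableAt ℝ (wdb ψ) z := by
  have : wdb ψ = fun w => (2⁻¹:ℂ) * ((fun w => fderiv ℝ ψ w 1) w
      + Complex.I * (fun w => fderiv ℝ ψ w Complex.I) w) := by
    funext w; simp [wdb, pdx, pdy]; ring
  rw [this]
  exact ((diff_pd hψ 1).add ((diff_pd hψ Complex.I).const_mul _)).const_mul _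

lemma fda_wdb {ψ : ℂ → ℂ} {z : ℂ} (hψ : ContDiffAt ℝ ((⊤:ℕ∞) : WithTop ℕ∞) ψ z) (v : ℂ) :
    fderiv ℝ (wdb ψ) z v
      = (fderiv ℝ (fderiv ℝ ψ) z v 1 + Complex.I * fderiv ℝ (fderiv ℝ ψ) z v Complex.I) / 2 := by
  have h0 : wdb ψ = fun w => (2⁻¹:ℂ) * ((fun w => fderiv ℝ ψ w 1) w
      + Complex.I * (fun w => fderiv ℝ ψ w Complex.I) w) := by
    funext w; simp [wdb, pdx, pdy]; ring
  rw [h0, fda_const_mul ((diff_pd hψ 1).fun_add ((diff_pd hψ Complex.I).const_mul _)),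
    fda_add (diff_pd hψ 1) ((diff_pd hψ Complex.I).const_mul _),
    fda_const_mul (diff_pd hψ Complex.I), fda_pd hψ 1 v, fda_pd hψ Complex.I v]
  ring

lemma diff_cab {a b : ℂ → ℝ} {z : ℂ} (ha : DifferentiableAt ℝ a z)
    (hb : DifferentiableAt ℝ b z) :
    DifferentiableAt ℝ (fun w => Complex.I * (((a w : ℂ) + Complex.I * (b w : ℂ)) / 2)) z := by
  have : (fun w => Complex.I * (((a w : ℂ) + Complex.I * (b w : ℂ)) / 2))
      = fun w => (Complex.I/2) * ((a w : ℂ) + Complex.I * (b w : ℂ)) := by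
    funext w; ring
  rw [this]
  exact ((diff_ofReal ha).add ((diff_ofReal hb).const_mul _)).const_mul _

lemma fda_cab {a b : ℂ → ℝ} {z : ℂ} (ha : DifferentiableAt ℝ a z)
    (hb : DifferentiableAt ℝ b z) (v : ℂ) :
    fderiv ℝ (fun w => Complex.I * (((a w : ℂ) + Complex.I * (b w : ℂ)) / 2)) z v
      = Complex.I * (((fderiv ℝ a z v : ℂ) + Complex.I * (fderiv ℝ b z v : ℂ)) / 2) := by
  have h0 : (fun w => Complex.I * (((a w : ℂ) + Complex.I * (b w : ℂ)) / 2))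
      = fun w => (Complex.I/2) * ((fun w => (a w:ℂ)) w + Complex.I * (fun w => (b w:ℂ)) w) := by
    funext w; ring
  rw [h0, fda_const_mul ((diff_ofReal ha).fun_add ((diff_ofReal hb).const_mul _)),
    fda_add (diff_ofReal ha) ((diff_ofReal hb).const_mul _),
    fda_const_mul (diff_ofReal hb), fda_ofReal ha, fda_ofReal hb]
  ring

lemma cdb_fun (a b : ℂ → ℝ) (ψ : ℂ → ℂ) :
    cdb a b ψ = fun w => wdb ψ w
      - (fun w => Complex.I * (((a w : ℂ) + Complex.I * (b w : ℂ)) / 2)) w * ψ w := by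
  funext w; simp [cdb]

lemma fda_cdb {a b : ℂ → ℝ} {ψ : ℂ → ℂ} {z : ℂ} (ha : DifferentiableAt ℝ a z)
    (hb : DifferentiableAt ℝ b z) (hψ : ContDiffAt ℝ ((⊤:ℕ∞) : WithTop ℕ∞) ψ z) (v : ℂ) :
    fderiv ℝ (cdb a b ψ) z v
      = (fderiv ℝ (fderiv ℝ ψ) z v 1 + Complex.I * fderiv ℝ (fderiv ℝ ψ) z v Complex.I) / 2
        - (Complex.I * (((fderiv ℝ a z v : ℂ) + Complex.I * (fderiv ℝ b z v : ℂ)) / 2) * ψ z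
           + Complex.I * (((a z : ℂ) + Complex.I * (b z : ℂ)) / 2) * fderiv ℝ ψ z v) := by
  have hψd : DifferentiableAt ℝ ψ z := hψ.differentiableAt top_le
  rw [cdb_fun, fda_sub (diff_wdb hψ) ((diff_cab ha hb).fun_mul hψd),
    fda_mul (diff_cab ha hb) hψd, fda_wdb hψ v, fda_cab ha hb v]

lemma wd_cdb_eq {a b : ℂ → ℝ} {ψ : ℂ → ℂ} {z : ℂ} (ha : DifferentiableAt ℝ a z)
    (hb : DifferentiableAt ℝ b z) (hψ : ContDiffAt ℝ ((⊤:ℕ∞) : WithTop ℕ∞) ψ z) :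
    wd (cdb a b ψ) z
      = (((fderiv ℝ (fderiv ℝ ψ) z 1 1 + Complex.I * fderiv ℝ (fderiv ℝ ψ) z 1 Complex.I) / 2
          - (Complex.I * (((fderiv ℝ a z 1 : ℂ) + Complex.I * (fderiv ℝ b z 1 : ℂ)) / 2) * ψ z
             + Complex.I * (((a z : ℂ) + Complex.I * (b z : ℂ)) / 2) * fderiv ℝ ψ z 1))
        - Complex.I *
          ((fderiv ℝ (fderiv ℝ ψ) z 1 Complex.I
              + Complex.I * fderiv ℝ (fderiv ℝ ψ) z Complex.I Complex.I) / 2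
          - (Complex.I * (((fderiv ℝ a z Complex.I : ℂ)
                + Complex.I * (fderiv ℝ b z Complex.I : ℂ)) / 2) * ψ z
             + Complex.I * (((a z : ℂ) + Complex.I * (b z : ℂ)) / 2)
                * fderiv ℝ ψ z Complex.I))) / 2 := by
  have h1 : wd (cdb a b ψ) z
      = (fderiv ℝ (cdb a b ψ) z 1 - Complex.I * fderiv ℝ (cdb a b ψ) z Complex.I) / 2 := rfl
  rw [h1, fda_cdb ha hb hψ 1, fda_cdb ha hb hψ Complex.I, snd_symm hψ]

lemma backward_key {a b h : ℂ → ℝ} {ψ : ℂ → ℂ} {z : ℂ} (ha : DifferentiableAt ℝ a z)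
    (hb : DifferentiableAt ℝ b z) (hψ : ContDiffAt ℝ ((⊤:ℕ∞) : WithTop ℕ∞) ψ z) :
    -(h z : ℂ)^2 * (cdx a (cdx a ψ) z + cdy b (cdy b ψ) z)
      + (((-((h z)^2 * (pdxR b z - pdyR a z))) : ℝ) : ℂ) * ψ z
    = (-4*(h z:ℂ)^2) * wd (cdb a b ψ) z
      + (2*Complex.I*(h z:ℂ)^2*((a z:ℂ) - Complex.I*(b z:ℂ))) * cdb a b ψ z := by
  rw [cdxcdx_eq ha hψ, cdycdy_eq hb hψ, wd_cdb_eq ha hb hψ]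
  simp only [cdb, wdb, pdx, pdy, pdxR, pdyR]
  push_cast
  have h2 : Complex.I^2 = -1 := Complex.I_sq
  have h3 : Complex.I^3 = -Complex.I := by rw [pow_succ, h2]; ring
  have h4 : Complex.I^4 = 1 := by rw [show (4:ℕ) = 2+2 from rfl, pow_add, h2]; ring
  ring_nf
  simp only [h2, h3, h4]
  ring

lemma wd_mul {f g : ℂ → ℂ} {z : ℂ} (hf : DifferentiableAt ℝ f z)
    (hg : DifferentiableAt ℝ g z) :
    wd (fun w => f w * g w) z = wd f z * g z + f z * wd g z := by
  unfold wd pdx pdy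
  rw [fda_mul hf hg 1, fda_mul hf hg Complex.I]
  ring

lemma wd_add {f g : ℂ → ℂ} {z : ℂ} (hf : DifferentiableAt ℝ f z)
    (hg : DifferentiableAt ℝ g z) :
    wd (fun w => f w + g w) z = wd f z + wd g z := by
  unfold wd pdx pdy
  rw [fda_add hf hg 1, fda_add hf hg Complex.I]
  ring

lemma fderiv_zero' (z : ℂ) : fderiv ℝ (0 : ℂ → ℂ →L[ℝ] ℂ) z = 0 := fderiv_const_apply 0

-- test function ψ₀ = 1
lemma LSch_one {a b h U : ℂ → ℝ} {z : ℂ} (ha : DifferentiableAt ℝ a z)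
    (hb : DifferentiableAt ℝ b z) :
    LSch a b h U (fun _ => 1) z
      = (h z:ℂ)^2*(Complex.I*(pdxR a z:ℂ) + Complex.I*(pdyR b z:ℂ)
        + (a z:ℂ)^2 + (b z:ℂ)^2) + (U z:ℂ) := by
  unfold LSch
  rw [cdxcdx_eq ha contDiffAt_const, cdycdy_eq hb contDiffAt_const]
  simp [pdx, pdy, fderiv_const, fderiv_zero']
  have h2 : Complex.I^2 = -1 := Complex.I_sq
  ring_nf
  simp only [h2]
  ring

-- ψ₁ = w - z₀
lemma fderiv_psi1 (z₀ w : ℂ) :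
    fderiv ℝ (fun w : ℂ => w - z₀) w = ContinuousLinearMap.id ℝ ℂ :=
  ((hasFDerivAt_id w).sub_const z₀).fderiv

lemma snd_psi1 (z₀ z : ℂ) : fderiv ℝ (fderiv ℝ (fun w : ℂ => w - z₀)) z = 0 := by
  have : fderiv ℝ (fun w : ℂ => w - z₀) = fun _ => ContinuousLinearMap.id ℝ ℂ := by
    funext w; exact fderiv_psi1 z₀ w
  rw [this]
  exact fderiv_const_apply _

lemma contDiff_psi1 (z₀ : ℂ) : ContDiff ℝ ((⊤:ℕ∞) : WithTop ℕ∞) (fun w : ℂ => w - z₀) :=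
  contDiff_id.sub contDiff_const

-- ψ₂ = conj w - conj z₀
lemma fderiv_psi2 (z₀ w : ℂ) :
    fderiv ℝ (fun w : ℂ => (starRingEnd ℂ) w - (starRingEnd ℂ) z₀) w
      = Complex.conjCLE.toContinuousLinearMap :=
  (Complex.conjCLE.hasFDerivAt.sub_const _).fderiv

lemma snd_psi2 (z₀ z : ℂ) :
    fderiv ℝ (fderiv ℝ (fun w : ℂ => (starRingEnd ℂ) w - (starRingEnd ℂ) z₀)) z = 0 := by
  have : fderiv ℝ (fun w : ℂ => (starRingEnd ℂ) w - (starRingEnd ℂ) z₀)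
      = fun _ => Complex.conjCLE.toContinuousLinearMap := by
    funext w; exact fderiv_psi2 z₀ w
  rw [this]
  exact fderiv_const_apply _

lemma contDiff_psi2 (z₀ : ℂ) :
    ContDiff ℝ ((⊤:ℕ∞) : WithTop ℕ∞) (fun w : ℂ => (starRingEnd ℂ) w - (starRingEnd ℂ) z₀) :=
  Complex.conjCLE.contDiff.sub contDiff_const

-- ψ₃ = (w - z₀) * (conj w - conj z₀)
lemma contDiff_psi3 (z₀ : ℂ) :
    ContDiff ℝ ((⊤:ℕ∞) : WithTop ℕ∞)
      (fun w : ℂ => (w - z₀) * ((starRingEnd ℂ) w - (starRingEnd ℂ) z₀)) :=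
  (contDiff_psi1 z₀).mul (contDiff_psi2 z₀)

lemma fderiv_psi3 (z₀ w v : ℂ) :
    fderiv ℝ (fun w : ℂ => (w - z₀) * ((starRingEnd ℂ) w - (starRingEnd ℂ) z₀)) w v
      = v * ((starRingEnd ℂ) w - (starRingEnd ℂ) z₀) + (w - z₀) * (starRingEnd ℂ) v := by
  have hd1 : DifferentiableAt ℝ (fun w : ℂ => w - z₀) w :=
    (contDiff_psi1 z₀).differentiable top_le w
  have hd2 : DifferentiableAt ℝ (fun w : ℂ => (starRingEnd ℂ) w - (starRingEnd ℂ) z₀) w :=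
    (contDiff_psi2 z₀).differentiable top_le w
  rw [fda_mul hd1 hd2 v, fderiv_psi1, fderiv_psi2]
  rfl

lemma snd_psi3 (z₀ z v c : ℂ) :
    fderiv ℝ (fderiv ℝ (fun w : ℂ => (w - z₀) * ((starRingEnd ℂ) w - (starRingEnd ℂ) z₀))) z v c
      = c * (starRingEnd ℂ) v + v * (starRingEnd ℂ) c := by
  have hψ : ContDiffAt ℝ ((⊤:ℕ∞) : WithTop ℕ∞)
      (fun w : ℂ => (w - z₀) * ((starRingEnd ℂ) w - (starRingEnd ℂ) z₀)) z :=
    (contDiff_psi3 z₀).contDiffAt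
  rw [← fda_pd hψ c v]
  have h0 : (fun w => fderiv ℝ
        (fun w : ℂ => (w - z₀) * ((starRingEnd ℂ) w - (starRingEnd ℂ) z₀)) w c)
      = fun w => c * ((fun w : ℂ => (starRingEnd ℂ) w - (starRingEnd ℂ) z₀) w)
          + ((fun w : ℂ => w - z₀) w) * (starRingEnd ℂ) c := by
    funext w; rw [fderiv_psi3]
  rw [h0]
  have hd2 : DifferentiableAt ℝ (fun w : ℂ => (starRingEnd ℂ) w - (starRingEnd ℂ) z₀) z :=
    (contDiff_psi2 z₀).differentiable top_le z
  have hd1 : DifferentiableAt ℝ (fun w : ℂ => w - z₀) z :=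
    (contDiff_psi1 z₀).differentiable top_le z
  rw [fda_add (hd2.const_mul c) (hd1.mul_const _) v, fda_const_mul hd2,
    fderiv_psi2]
  have : fderiv ℝ (fun w : ℂ => (fun w : ℂ => w - z₀) w * (starRingEnd ℂ) c) z v
      = v * (starRingEnd ℂ) c := by
    rw [fda_mul hd1 (differentiableAt_const _) v, fderiv_psi1]
    simp
  rw [this]
  simp

lemma LSch_psi1 {a b h U : ℂ → ℝ} {z₀ : ℂ} (ha : DifferentiableAt ℝ a z₀)
    (hb : DifferentiableAt ℝ b z₀) :
    LSch a b h U (fun w => w - z₀) z₀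
      = -(h z₀:ℂ)^2 * (-2*Complex.I*(a z₀:ℂ) + 2*(b z₀:ℂ)) := by
  unfold LSch
  rw [cdxcdx_eq ha (contDiff_psi1 z₀).contDiffAt, cdycdy_eq hb (contDiff_psi1 z₀).contDiffAt]
  simp only [pdx, pdy, fderiv_psi1, snd_psi1, sub_self, ContinuousLinearMap.id_apply,
    ContinuousLinearMap.zero_apply]
  have h2 : Complex.I^2 = -1 := Complex.I_sq
  ring_nf
  simp only [h2]
  ring

lemma LSch_psi2 {a b h U : ℂ → ℝ} {z₀ : ℂ} (ha : DifferentiableAt ℝ a z₀)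
    (hb : DifferentiableAt ℝ b z₀) :
    LSch a b h U (fun w => (starRingEnd ℂ) w - (starRingEnd ℂ) z₀) z₀
      = -(h z₀:ℂ)^2 * (-2*Complex.I*(a z₀:ℂ) - 2*(b z₀:ℂ)) := by
  unfold LSch
  rw [cdxcdx_eq ha (contDiff_psi2 z₀).contDiffAt, cdycdy_eq hb (contDiff_psi2 z₀).contDiffAt]
  simp only [pdx, pdy, fderiv_psi2, snd_psi2, sub_self, ContinuousLinearMap.zero_apply]
  have hc1 : Complex.conjCLE.toContinuousLinearMap (1:ℂ) = 1 := by simp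
  have hcI : Complex.conjCLE.toContinuousLinearMap Complex.I = -Complex.I := by simp
  rw [hc1, hcI]
  have h2 : Complex.I^2 = -1 := Complex.I_sq
  ring_nf
  simp only [h2]
  ring

lemma LSch_psi3 {a b h U : ℂ → ℝ} {z₀ : ℂ} (ha : DifferentiableAt ℝ a z₀)
    (hb : DifferentiableAt ℝ b z₀) :
    LSch a b h U (fun w => (w - z₀) * ((starRingEnd ℂ) w - (starRingEnd ℂ) z₀)) z₀
      = -4*(h z₀:ℂ)^2 := by
  unfold LSch
  rw [cdxcdx_eq ha (contDiff_psi3 z₀).contDiffAt, cdycdy_eq hb (contDiff_psi3 z₀).contDiffAt]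
  simp only [pdx, pdy, fderiv_psi3, snd_psi3, sub_self]
  simp [Complex.conj_I]
  ring

lemma wdb_one : wdb (fun _ : ℂ => (1:ℂ)) = fun _ => 0 := by
  funext w; simp [wdb, pdx, pdy, fderiv_const]

lemma wdb_psi1 (z₀ : ℂ) : wdb (fun w : ℂ => w - z₀) = fun _ => 0 := by
  funext w
  simp [wdb, pdx, pdy, fderiv_psi1, Complex.I_mul_I]

lemma wd_psi1 (z₀ z : ℂ) : wd (fun w : ℂ => w - z₀) z = 1 := by
  simp [wd, pdx, pdy, fderiv_psi1, Complex.I_mul_I]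

lemma wdb_psi2 (z₀ : ℂ) :
    wdb (fun w : ℂ => (starRingEnd ℂ) w - (starRingEnd ℂ) z₀) = fun _ => 1 := by
  funext w
  have hc1 : Complex.conjCLE.toContinuousLinearMap (1:ℂ) = 1 := by simp
  have hcI : Complex.conjCLE.toContinuousLinearMap Complex.I = -Complex.I := by simp
  simp [wdb, pdx, pdy, fderiv_psi2, hc1, hcI, Complex.I_mul_I]

lemma wd_psi2 (z₀ z : ℂ) : wd (fun w : ℂ => (starRingEnd ℂ) w - (starRingEnd ℂ) z₀) z = 0 := by
  have hc1 : Complex.conjCLE.toContinuousLinearMap (1:ℂ) = 1 := by simp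
  have hcI : Complex.conjCLE.toContinuousLinearMap Complex.I = -Complex.I := by simp
  simp [wd, pdx, pdy, fderiv_psi2, hc1, hcI, Complex.I_mul_I]

lemma wdb_psi3 (z₀ : ℂ) :
    wdb (fun w : ℂ => (w - z₀) * ((starRingEnd ℂ) w - (starRingEnd ℂ) z₀))
      = fun w => w - z₀ := by
  funext w
  simp [wdb, pdx, pdy, fderiv_psi3, Complex.conj_I, Complex.I_mul_I]
  ring_nf
  simp only [Complex.I_sq]
  ring

lemma wd_psi3 (z₀ : ℂ) :
    wd (fun w : ℂ => (w - z₀) * ((starRingEnd ℂ) w - (starRingEnd ℂ) z₀)) z₀ = 0 := by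
  simp [wd, pdx, pdy, fderiv_psi3, Complex.conj_I, Complex.I_mul_I]

/-- the α-factorisation L = (α₁∂ + α₀)(α₁*∂̄ + α₀*) exists
(with smooth coefficients) iff U = -B. -/
theorem alpha_factorisation_iff_U_eq_neg_B
    (Ω : Set ℂ) (hΩ : IsOpen Ω) (a b h U : ℂ → ℝ)
    (ha : ContDiffOn ℝ (⊤ : ℕ∞) a Ω) (hb : ContDiffOn ℝ (⊤ : ℕ∞) b Ω)
    (hh : ContDiffOn ℝ (⊤ : ℕ∞) h Ω) (hU : ContDiffOn ℝ (⊤ : ℕ∞) U Ω)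
    (hhpos : ∀ z ∈ Ω, 0 < h z) :
    (∃ α₁ α₀ α₁s α₀s : ℂ → ℂ,
        ContDiffOn ℝ (⊤ : ℕ∞) α₁ Ω ∧ ContDiffOn ℝ (⊤ : ℕ∞) α₀ Ω ∧
        ContDiffOn ℝ (⊤ : ℕ∞) α₁s Ω ∧ ContDiffOn ℝ (⊤ : ℕ∞) α₀s Ω ∧
        ∀ ψ : ℂ → ℂ, ContDiffOn ℝ (⊤ : ℕ∞) ψ Ω → ∀ z ∈ Ω,
          LSch a b h U ψ z =
            α₁ z * wd (fun w => α₁s w * wdb ψ w + α₀s w * ψ w) z +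
            α₀ z * (α₁s z * wdb ψ z + α₀s z * ψ z)) ↔
      (∀ z ∈ Ω, U z = -Bf a b h z) := by
  constructor
  · rintro ⟨α₁, α₀, α₁s, α₀s, hα₁, hα₀, hα₁s, hα₀s, hfact⟩ z₀ hz₀
    have hda : ∀ z ∈ Ω, DifferentiableAt ℝ a z := fun z hz =>
      (ha.contDiffAt (hΩ.mem_nhds hz)).differentiableAt top_le
    have hdb : ∀ z ∈ Ω, DifferentiableAt ℝ b z := fun z hz =>
      (hb.contDiffAt (hΩ.mem_nhds hz)).differentiableAt top_le
    have hd1s : ∀ z ∈ Ω, DifferentiableAt ℝ α₁s z := fun z hz =>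
      (hα₁s.contDiffAt (hΩ.mem_nhds hz)).differentiableAt top_le
    have hd0s : ∀ z ∈ Ω, DifferentiableAt ℝ α₀s z := fun z hz =>
      (hα₀s.contDiffAt (hΩ.mem_nhds hz)).differentiableAt top_le
    -- Eq1
    have Eq1 : ∀ z ∈ Ω, -4*(h z:ℂ)^2 = α₁ z * α₁s z := by
      intro z hz
      have e := hfact (fun w => (w - z) * ((starRingEnd ℂ) w - (starRingEnd ℂ) z))
        ((contDiff_psi3 z).contDiffOn) z hz
      rw [LSch_psi3 (hda z hz) (hdb z hz)] at e
      simp only [wdb_psi3 z] at e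
      rw [wd_add ((hd1s z hz).fun_mul ((contDiff_psi1 z).differentiable top_le z))
        ((hd0s z hz).fun_mul ((contDiff_psi3 z).differentiable top_le z)),
        wd_mul (hd1s z hz) ((contDiff_psi1 z).differentiable top_le z),
        wd_mul (hd0s z hz) ((contDiff_psi3 z).differentiable top_le z),
        wd_psi1, wd_psi3] at e
      simp only [sub_self, mul_zero, zero_mul, add_zero, zero_add, mul_one] at e
      linear_combination e
    -- Eq2
    have Eq2 : ∀ z ∈ Ω, -(h z:ℂ)^2 * (-2*Complex.I*(a z:ℂ) + 2*(b z:ℂ)) = α₁ z * α₀s z := by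
      intro z hz
      have e := hfact (fun w => w - z) ((contDiff_psi1 z).contDiffOn) z hz
      rw [LSch_psi1 (hda z hz) (hdb z hz)] at e
      simp only [wdb_psi1 z, mul_zero, zero_add] at e
      rw [wd_mul (hd0s z hz) ((contDiff_psi1 z).differentiable top_le z), wd_psi1] at e
      simp only [sub_self, mul_zero, zero_mul, add_zero, zero_add, mul_one] at e
      linear_combination e
    -- Eq3
    have Eq3 : ∀ z ∈ Ω, -(h z:ℂ)^2 * (-2*Complex.I*(a z:ℂ) - 2*(b z:ℂ))
        = α₁ z * wd α₁s z + α₀ z * α₁s z := by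
      intro z hz
      have e := hfact (fun w => (starRingEnd ℂ) w - (starRingEnd ℂ) z)
        ((contDiff_psi2 z).contDiffOn) z hz
      rw [LSch_psi2 (hda z hz) (hdb z hz)] at e
      simp only [wdb_psi2 z, mul_one] at e
      rw [wd_add (hd1s z hz) ((hd0s z hz).fun_mul ((contDiff_psi2 z).differentiable top_le z)),
        wd_mul (hd0s z hz) ((contDiff_psi2 z).differentiable top_le z), wd_psi2] at e
      simp only [sub_self, mul_zero, zero_mul, add_zero, zero_add, mul_one] at e
      linear_combination e
    -- Eq0
    have Eq0 : ∀ z ∈ Ω, (h z:ℂ)^2*(Complex.I*(pdxR a z:ℂ) + Complex.I*(pdyR b z:ℂ)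
        + (a z:ℂ)^2 + (b z:ℂ)^2) + (U z:ℂ)
        = α₁ z * wd α₀s z + α₀ z * α₀s z := by
      intro z hz
      have e := hfact (fun _ => 1) contDiffOn_const z hz
      rw [LSch_one (hda z hz) (hdb z hz)] at e
      simp only [wdb_one, mul_zero, zero_add, mul_one] at e
      exact e
    -- pointwise identity for α₀s
    have hS0 : ∀ z ∈ Ω, α₀s z
        = -(Complex.I * (((a z:ℂ) + Complex.I * (b z:ℂ)) / 2) * α₁s z) := by
      intro z hz
      have hhz : (h z:ℂ) ≠ 0 := by
        exact_mod_cast (hhpos z hz).ne'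
      have hA1 : α₁ z ≠ 0 := by
        intro h0
        have := Eq1 z hz
        rw [h0, zero_mul] at this
        have h4 : (-4 : ℂ) * (h z:ℂ)^2 ≠ 0 :=
          mul_ne_zero (by norm_num) (pow_ne_zero 2 hhz)
        exact h4 this
      have key : α₁ z * (α₀s z + Complex.I * (((a z:ℂ) + Complex.I * (b z:ℂ)) / 2) * α₁s z)
          = 0 := by
        linear_combination -(Eq2 z hz) - (Complex.I * (((a z:ℂ) + Complex.I * (b z:ℂ)) / 2))
          * (Eq1 z hz) - 2*(h z:ℂ)^2*(b z:ℂ)*Complex.I_sq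
      have h0 := (mul_eq_zero.mp key).resolve_left hA1
      linear_combination h0
    -- derivative of α₀s at z₀
    have heq : α₀s =ᶠ[nhds z₀]
        fun w => -((fun w => Complex.I * (((a w:ℂ) + Complex.I * (b w:ℂ)) / 2)) w * α₁s w) :=
      Filter.eventuallyEq_of_mem (hΩ.mem_nhds hz₀) (fun w hw => hS0 w hw)
    have hfd : fderiv ℝ α₀s z₀ = fderiv ℝ
        (fun w => -((fun w => Complex.I * (((a w:ℂ) + Complex.I * (b w:ℂ)) / 2)) w * α₁s w)) z₀ :=
      heq.fderiv_eq
    have hv : ∀ v, fderiv ℝ α₀s z₀ v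
        = -(Complex.I * (((fderiv ℝ a z₀ v:ℂ) + Complex.I * (fderiv ℝ b z₀ v:ℂ)) / 2) * α₁s z₀
            + Complex.I * (((a z₀:ℂ) + Complex.I * (b z₀:ℂ)) / 2) * fderiv ℝ α₁s z₀ v) := by
      intro v
      rw [hfd, fderiv_fun_neg, ContinuousLinearMap.neg_apply,
        fda_mul (diff_cab (hda z₀ hz₀) (hdb z₀ hz₀)) (hd1s z₀ hz₀),
        fda_cab (hda z₀ hz₀) (hdb z₀ hz₀) v]
    have hdS0 : wd α₀s z₀
        = -(((Complex.I * (((fderiv ℝ a z₀ 1:ℂ) + Complex.I * (fderiv ℝ b z₀ 1:ℂ)) / 2))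
              - Complex.I * (Complex.I * (((fderiv ℝ a z₀ Complex.I:ℂ)
                + Complex.I * (fderiv ℝ b z₀ Complex.I:ℂ)) / 2))) / 2 * α₁s z₀
            + Complex.I * (((a z₀:ℂ) + Complex.I * (b z₀:ℂ)) / 2) * wd α₁s z₀) := by
      unfold wd pdx pdy
      rw [hv 1, hv Complex.I]
      ring
    -- closed form for U
    have hUclosed : (U z₀:ℂ)
        = 4*(h z₀:ℂ)^2 * (((Complex.I * (((fderiv ℝ a z₀ 1:ℂ)
              + Complex.I * (fderiv ℝ b z₀ 1:ℂ)) / 2))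
              - Complex.I * (Complex.I * (((fderiv ℝ a z₀ Complex.I:ℂ)
                + Complex.I * (fderiv ℝ b z₀ Complex.I:ℂ)) / 2))) / 2)
          - Complex.I * (((a z₀:ℂ) + Complex.I * (b z₀:ℂ)) / 2)
              * (-(h z₀:ℂ)^2 * (-2*Complex.I*(a z₀:ℂ) - 2*(b z₀:ℂ)))
          - (h z₀:ℂ)^2*(Complex.I*(pdxR a z₀:ℂ) + Complex.I*(pdyR b z₀:ℂ)
              + (a z₀:ℂ)^2 + (b z₀:ℂ)^2) := by
      have e0 := Eq0 z₀ hz₀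
      rw [hdS0, hS0 z₀ hz₀] at e0
      linear_combination e0
        + (((Complex.I * (((fderiv ℝ a z₀ 1:ℂ) + Complex.I * (fderiv ℝ b z₀ 1:ℂ)) / 2))
              - Complex.I * (Complex.I * (((fderiv ℝ a z₀ Complex.I:ℂ)
                + Complex.I * (fderiv ℝ b z₀ Complex.I:ℂ)) / 2))) / 2) * (Eq1 z₀ hz₀)
        + (Complex.I * (((a z₀:ℂ) + Complex.I * (b z₀:ℂ)) / 2)) * (Eq3 z₀ hz₀)
    have hfinal : (U z₀:ℂ) = ((-Bf a b h z₀ : ℝ) : ℂ) := by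
      rw [hUclosed]
      unfold Bf pdxR pdyR
      push_cast
      have h2 : Complex.I^2 = -1 := Complex.I_sq
      have h3 : Complex.I^3 = -Complex.I := by rw [pow_succ, h2]; ring
      ring_nf
      simp only [h2, h3]
      ring
    exact_mod_cast hfinal
  · intro hU'
    have hCa : ContDiffOn ℝ ((⊤:ℕ∞) : WithTop ℕ∞) (fun w => ((a w : ℝ) : ℂ)) Ω :=
      Complex.ofRealCLM.contDiff.comp_contDiffOn ha
    have hCb : ContDiffOn ℝ ((⊤:ℕ∞) : WithTop ℕ∞) (fun w => ((b w : ℝ) : ℂ)) Ω :=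
      Complex.ofRealCLM.contDiff.comp_contDiffOn hb
    have hCh : ContDiffOn ℝ ((⊤:ℕ∞) : WithTop ℕ∞) (fun w => ((h w : ℝ) : ℂ)) Ω :=
      Complex.ofRealCLM.contDiff.comp_contDiffOn hh
    refine ⟨fun w => -4*(h w:ℂ)^2,
      fun w => 2*Complex.I*(h w:ℂ)^2*((a w:ℂ) - Complex.I*(b w:ℂ)),
      fun _ => 1,
      fun w => -(Complex.I * (((a w:ℂ) + Complex.I*(b w:ℂ))/2)), ?_, ?_, ?_, ?_, ?_⟩
    · exact ContDiffOn.congr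
        ((contDiffOn_const (c := (-4:ℂ))).mul (hCh.pow 2)) (fun w _ => by ring)
    · exact ContDiffOn.congr
        ((contDiffOn_const (c := (2*Complex.I:ℂ))).mul
          ((hCh.pow 2).mul (hCa.sub ((contDiffOn_const (c := Complex.I)).mul hCb))))
        (fun w _ => by ring)
    · exact contDiffOn_const
    · exact ContDiffOn.congr
        ((contDiffOn_const (c := (-(Complex.I/2):ℂ))).mul
          (hCa.add ((contDiffOn_const (c := Complex.I)).mul hCb)))
        (fun w _ => by ring)
    · intro ψ hψ z hz
      have haz : DifferentiableAt ℝ a z := (ha.contDiffAt (hΩ.mem_nhds hz)).differentiableAt top_le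
      have hbz : DifferentiableAt ℝ b z := (hb.contDiffAt (hΩ.mem_nhds hz)).differentiableAt top_le
      have hψz : ContDiffAt ℝ ((⊤:ℕ∞) : WithTop ℕ∞) ψ z := hψ.contDiffAt (hΩ.mem_nhds hz)
      have hfun : (fun w => (1:ℂ) * wdb ψ w
          + (-(Complex.I * (((a w:ℂ) + Complex.I*(b w:ℂ))/2))) * ψ w) = cdb a b ψ := by
        funext w; simp only [cdb]; ring
      have hval : (1:ℂ) * wdb ψ z + (-(Complex.I * (((a z:ℂ) + Complex.I*(b z:ℂ))/2))) * ψ z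
          = cdb a b ψ z := by
        simp only [cdb]; ring
      rw [hfun, hval]
      have hLS : LSch a b h U ψ z
          = -(h z : ℂ)^2 * (cdx a (cdx a ψ) z + cdy b (cdy b ψ) z)
            + (((-((h z)^2 * (pdxR b z - pdyR a z))) : ℝ) : ℂ) * ψ z := by
        unfold LSch
        rw [hU' z hz]
        norm_num [Bf]
      rw [hLS, backward_key haz hbz hψz]
end
end

section
/- Let Ω ⊆ ℂ be open, let a, b, U be smooth real-valued functions and h a smooth positive real-valued function on Ω, with covariant derivatives ∇, ∇̄ and magnetic field B = h²(∂ₓb - ∂_y a). Assume W := U - B is nonvanishing on Ω, and define the new covariant derivative ∇̃φ = ∇φ - (∂W/W)φ + 2(∂h/h)φ. If ψ : Ω → ℂ is smooth and satisfies the Schrödinger equation -4h²∇̄(∇ψ) + Wψ = 0, then its Laplace transform ψ̃ := ∇ψ satisfies -4h²∇̃(∇̄ψ̃) + Wψ̃ = 0. -/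
open Complex ComplexConjugate MeasureTheory

noncomputable section

/-- Auxiliary: `wd` only depends on the germ of the function at the point. -/
lemma wd_congr {f g : ℂ → ℂ} {z : ℂ} (h : f =ᶠ[nhds z] g) : wd f z = wd g z := by
  unfold wd pdx pdy; rw [h.fderiv_eq]

/-- Auxiliary: `wd` of a constant vanishes. -/
lemma wd_const (c : ℂ) (z : ℂ) : wd (fun _ => c) z = 0 := by
  unfold wd pdx pdy
  simp

/-- Auxiliary: quotient rule (inverse) for the Wirtinger derivative `wd`. -/
lemma wd_inv {f : ℂ → ℂ} {z : ℂ} (hf : DifferentiableAt ℝ f z) (h0 : f z ≠ 0) :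
    wd (fun w => (f w)⁻¹) z = -(f z ^ 2)⁻¹ * wd f z := by
  have hcomp : (fun w => (f w)⁻¹) = Inv.inv ∘ f := rfl
  unfold wd pdx pdy
  rw [hcomp, fderiv_comp z (differentiableAt_inv h0) hf, fderiv_inv' h0]
  simp [ContinuousLinearMap.comp_apply, ContinuousLinearMap.mulLeftRight_apply]
  field_simp
  ring

/-- Auxiliary: complexification of a real smooth function is differentiable. -/
lemma diffAt_ofReal_of_contDiffOn {Ω : Set ℂ} (hΩ : IsOpen Ω) {f : ℂ → ℝ}
    (hf : ContDiffOn ℝ (⊤ : ℕ∞) f Ω) {z : ℂ} (hz : z ∈ Ω) :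
    DifferentiableAt ℝ (fun w => ((f w : ℝ) : ℂ)) z :=
  Complex.ofRealCLM.differentiableAt.comp z
    (((hf.differentiableOn (by simp)) z hz).differentiableAt (hΩ.mem_nhds hz))

/-- the Laplace transformation ψ ↦ ψ̃ = ∇ψ sends zero modes of
L = -4h²∇̄∇ + W (W = U - B nonvanishing) to zero modes of L̃ = -4h²∇̃∇̄ + W, where
∇̃φ = ∇φ - (∂W/W)φ + 2(∂h/h)φ. -/
theorem laplace_transformation_of_zero_modes
    (Ω : Set ℂ) (hΩ : IsOpen Ω) (a b U h : ℂ → ℝ)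
    (ha : ContDiffOn ℝ (⊤ : ℕ∞) a Ω) (hb : ContDiffOn ℝ (⊤ : ℕ∞) b Ω)
    (hU : ContDiffOn ℝ (⊤ : ℕ∞) U Ω) (hh : ContDiffOn ℝ (⊤ : ℕ∞) h Ω)
    (hhpos : ∀ z ∈ Ω, 0 < h z)
    (hW : ∀ z ∈ Ω, U z - Bf a b h z ≠ 0)
    (ψ : ℂ → ℂ) (hψ : ContDiffOn ℝ (⊤ : ℕ∞) ψ Ω)
    (heq : ∀ z ∈ Ω,
      -4 * (h z : ℂ)^2 * cdb a b (fun w => cd a b ψ w) z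
        + ((U z - Bf a b h z : ℝ) : ℂ) * ψ z = 0) :
    let WC : ℂ → ℂ := fun w => ((U w - Bf a b h w : ℝ) : ℂ)
    let hC : ℂ → ℂ := fun w => ((h w : ℝ) : ℂ)
    let tcd : (ℂ → ℂ) → ℂ → ℂ := fun φ w =>
      cd a b φ w - (wd WC w / WC w) * φ w + 2 * (wd hC w / hC w) * φ w
    let ψt : ℂ → ℂ := fun w => cd a b ψ w
    ∀ z ∈ Ω,
      -4 * (h z : ℂ)^2 * tcd (fun w => cdb a b ψt w) z + WC z * ψt z = 0 := by
  intro WC hC tcd ψt z hz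
  have hmem := hΩ.mem_nhds hz
  have hψt : ψt = fun w => cd a b ψ w := rfl
  simp only [← hψt] at heq
  have hWCdef : ∀ w, ((U w - Bf a b h w : ℝ) : ℂ) = WC w := fun _ => rfl
  have hhCdef : ∀ w, ((h w : ℝ) : ℂ) = hC w := fun _ => rfl
  simp only [hWCdef, hhCdef] at heq ⊢
  have htcd : ∀ (φ : ℂ → ℂ) (w : ℂ), tcd φ w
      = cd a b φ w - (wd WC w / WC w) * φ w + 2 * (wd hC w / hC w) * φ w := fun _ _ => rfl
  rw [htcd]
  -- nonvanishing facts
  have hWz : WC z ≠ 0 := Complex.ofReal_ne_zero.2 (hW z hz)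
  have hhz : hC z ≠ 0 := Complex.ofReal_ne_zero.2 (hhpos z hz).ne'
  -- differentiability facts
  have dψ : DifferentiableAt ℝ ψ z :=
    ((hψ.differentiableOn (by simp)) z hz).differentiableAt hmem
  have dh : DifferentiableAt ℝ hC z := diffAt_ofReal_of_contDiffOn hΩ hh hz
  have dW : DifferentiableAt ℝ WC z := by
    have dpb : DifferentiableAt ℝ (fun w => pdxR b w) z := by
      have hb' : ContDiffOn ℝ (⊤ : ℕ∞) (fderiv ℝ b) Ω :=
        hb.fderiv_of_isOpen (m := (⊤ : ℕ∞)) hΩ (by exact_mod_cast le_top)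
      exact (((hb'.differentiableOn (by simp)) z hz).differentiableAt hmem).clm_apply
        (differentiableAt_const _)
    have dpa : DifferentiableAt ℝ (fun w => pdyR a w) z := by
      have ha' : ContDiffOn ℝ (⊤ : ℕ∞) (fderiv ℝ a) Ω :=
        ha.fderiv_of_isOpen (m := (⊤ : ℕ∞)) hΩ (by exact_mod_cast le_top)
      exact (((ha'.differentiableOn (by simp)) z hz).differentiableAt hmem).clm_apply
        (differentiableAt_const _)
    have dU : DifferentiableAt ℝ U z :=
      ((hU.differentiableOn (by simp)) z hz).differentiableAt hmem
    have dhR : DifferentiableAt ℝ h z :=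
      ((hh.differentiableOn (by simp)) z hz).differentiableAt hmem
    have : DifferentiableAt ℝ (fun w => U w - Bf a b h w) z := by
      unfold Bf
      exact dU.sub (((dhR.pow 2)).mul (dpb.sub dpa))
    exact Complex.ofRealCLM.differentiableAt.comp z this
  -- the eventual identity  ∇̄ψ̃ = Wψ/(4h²)
  have hfeq : (fun w => cdb a b ψt w)
      =ᶠ[nhds z] (fun w => WC w * ψ w * (4 * (hC w * hC w))⁻¹) := by
    filter_upwards [hmem] with w hw
    have hw0 : hC w ≠ 0 := Complex.ofReal_ne_zero.2 (hhpos w hw).ne'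
    have hE := heq w hw
    have hsq : (h w : ℂ) ^ 2 = hC w * hC w := by rw [sq]
    rw [hsq] at hE
    field_simp
    linear_combination -hE
  have hval : cdb a b ψt z = WC z * ψ z * (4 * (hC z * hC z))⁻¹ := hfeq.eq_of_nhds
  -- derivative computations
  have hp0 : (4 : ℂ) * (hC z * hC z) ≠ 0 := by
    simp [hhz]
  have dp : DifferentiableAt ℝ (fun w => (4 : ℂ) * (hC w * hC w)) z :=
    (differentiableAt_const _).mul (dh.mul dh)
  have E5 : wd (fun w => (4 : ℂ) * (hC w * hC w)) z
      = 4 * (wd hC z * hC z + hC z * wd hC z) := by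
    rw [wd_mul (f := fun _ => (4 : ℂ)) (g := fun w => hC w * hC w) (differentiableAt_const _) (dh.mul dh), wd_mul dh dh, wd_const]
    ring
  have E4 : wd (fun w => ((4 : ℂ) * (hC w * hC w))⁻¹) z
      = -((4 * (hC z * hC z)) ^ 2)⁻¹ * (4 * (wd hC z * hC z + hC z * wd hC z)) := by
    rw [wd_inv dp hp0, E5]
  have E2 : wd (fun w => WC w * ψ w) z = wd WC z * ψ z + WC z * wd ψ z := wd_mul dW dψ
  have E1 : wd (fun w => WC w * ψ w * (4 * (hC w * hC w))⁻¹) z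
      = (wd WC z * ψ z + WC z * wd ψ z) * (4 * (hC z * hC z))⁻¹
        + WC z * ψ z
          * (-((4 * (hC z * hC z)) ^ 2)⁻¹ * (4 * (wd hC z * hC z + hC z * wd hC z))) := by
    rw [wd_mul (f := fun w => WC w * ψ w) (g := fun w => (4 * (hC w * hC w))⁻¹) (dW.mul dψ) (dp.inv hp0), E2, E4]
  -- assemble
  have hwc : wd (fun w => cdb a b ψt w) z
      = wd (fun w => WC w * ψ w * (4 * (hC w * hC w))⁻¹) z := wd_congr hfeq
  have hcd : cd a b (fun w => cdb a b ψt w) z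
      = wd (fun w => cdb a b ψt w) z
        - Complex.I * ((↑(a z) - Complex.I * ↑(b z)) / 2) * cdb a b ψt z := rfl
  have hψtz : ψt z = wd ψ z - Complex.I * ((↑(a z) - Complex.I * ↑(b z)) / 2) * ψ z := rfl
  have hsqz : (hC z) ^ 2 = hC z * hC z := sq (hC z)
  rw [hcd, hwc, E1, hval, hψtz, hsqz]
  have hI : Complex.I ^ 2 = -1 := Complex.I_sq
  have hp2 : ((4 : ℂ) * (hC z * hC z)) ^ 2 ≠ 0 := pow_ne_zero _ hp0
  field_simp [hWz, hhz, hp0, hp2]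
  have hc13 : hC z ^ 13 * (hC z)⁻¹ ^ 13 = 1 := by
    rw [← mul_pow, mul_inv_cancel₀ hhz, one_pow]
  have hWinv : WC z ^ 2 * (WC z)⁻¹ = WC z := by
    rw [sq, mul_assoc, mul_inv_cancel₀ hWz, mul_one]
  ring
end
end

section
/- Let N ≥ 0 be a real number and let ψ : ℂ → ℂ be a smooth function satisfying D_N* ψ = 0, i.e. -(1+|z|²)∂ψ + (N+1)z̄ψ = 0 on all of ℂ, and suppose ψ is normalizable for the round sphere: ∫_ℂ |ψ(z)|²(1+|z|²)^{-2} dA(z) < ∞. Then ψ ≡ 0. (Equivalently: every solution of D_N*ψ = 0 has the form ψ(z) = g(z̄)·(1+|z|²)^{N+1} with g anti-entire, and no nonzero such function is square-integrable; this is the statement dim Ker D* = 0 for positive flux on the sphere.) -/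
open Complex ComplexConjugate MeasureTheory

noncomputable section

/-- Lowering operator D_N ψ = (1+|z|²)∂̄ψ + Nzψ. -/
def DN (N : ℝ) (ψ : ℂ → ℂ) (z : ℂ) : ℂ :=
  (1 + z * conj z) * wdb ψ z + (N : ℂ) * z * ψ z

/-- Raising operator D_N* ψ = -(1+|z|²)∂ψ + (N+1)z̄ψ. -/
def DNs (N : ℝ) (ψ : ℂ → ℂ) (z : ℂ) : ℂ :=
  -(1 + z * conj z) * wd ψ z + ((N : ℂ) + 1) * conj z * ψ z

/-- Dirac monopole operator
L_N ψ = -(1+|z|²)²∂∂̄ψ - Nz(1+|z|²)∂ψ + Nz̄(1+|z|²)∂̄ψ + N²(1+|z|²)ψ. -/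
def LN (N : ℝ) (ψ : ℂ → ℂ) (z : ℂ) : ℂ :=
  -(1 + z * conj z)^2 * wd (wdb ψ) z
    - (N : ℂ) * z * (1 + z * conj z) * wd ψ z
    + (N : ℂ) * conj z * (1 + z * conj z) * wdb ψ z
    + (N : ℂ)^2 * (1 + z * conj z) * ψ z

section AuxL2
open Metric Real
set_option maxHeartbeats 1000000

lemma mvp (f : ℂ → ℂ) (hf : Differentiable ℂ f) {r : ℝ} (hr : 0 < r) :
    ∫ θ in (0:ℝ)..2*π, f (circleMap 0 r θ) = (2*π : ℝ) • f 0 := by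
  have h := (hf.differentiableOn (s := closedBall 0 r)).circleIntegral_sub_inv_smul
      (w := 0) (mem_ball_self hr)
  rw [circleIntegral] at h
  simp only [deriv_circleMap, sub_zero, smul_eq_mul] at h
  have h2 : ∫ θ in (0:ℝ)..2*π, Complex.I * f (circleMap 0 r θ)
      = 2 * (π:ℂ) * Complex.I * f 0 := by
    rw [← h]
    apply intervalIntegral.integral_congr
    intro θ _
    have hz : circleMap 0 r θ ≠ 0 := circleMap_ne_center hr.ne'
    field_simp
  rw [intervalIntegral.integral_const_mul] at h2
  apply mul_left_cancel₀ Complex.I_ne_zero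
  rw [h2, Complex.real_smul]
  push_cast
  ring

lemma circle_bound (g : ℂ → ℂ) (hg : Differentiable ℂ g) {r : ℝ} (hr : 0 < r) :
    2*π*‖g 0‖^2 ≤ ∫ θ in (0:ℝ)..2*π, ‖g (circleMap 0 r θ)‖^2 := by
  have h := mvp (fun z => g z * g z) (hg.mul hg) hr
  calc 2*π*‖g 0‖^2
      = ‖∫ θ in (0:ℝ)..2*π, g (circleMap 0 r θ) * g (circleMap 0 r θ)‖ := by
        rw [h]
        have : ‖((2*π:ℝ)) • ((fun z => g z * g z) 0)‖ = (2*π) * (‖g 0‖*‖g 0‖) := by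
          rw [norm_smul, Real.norm_eq_abs, abs_of_pos Real.two_pi_pos, norm_mul]
        rw [this]; ring
    _ ≤ ∫ θ in (0:ℝ)..2*π, ‖g (circleMap 0 r θ) * g (circleMap 0 r θ)‖ :=
        intervalIntegral.norm_integral_le_integral_norm (by positivity)
    _ = _ := by simp only [norm_mul, sq]

lemma polar_symm_eq (p : ℝ × ℝ) : Complex.polarCoord.symm p = circleMap 0 p.1 p.2 := by
  rw [Complex.polarCoord_symm_apply, circleMap, Complex.exp_mul_I]
  push_cast
  ring

lemma entire_l2_zero_at (g : ℂ → ℂ) (hg : Differentiable ℂ g)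
    (hi : Integrable (fun z : ℂ => ‖g z‖^2)) : g 0 = 0 := by
  set c : ℝ := ‖g 0‖^2 with hc
  set M : ℝ := ∫ z : ℂ, ‖g z‖^2 with hMdef
  set Q : ℝ × ℝ → ℝ := fun p => p.1 • ‖g (Complex.polarCoord.symm p)‖^2 with hQdef
  have hE : ∫ p in polarCoord.target, Q p = M :=
    Complex.integral_comp_polarCoord_symm (fun z => ‖g z‖^2)
  -- circle estimate over Ioo (-π) π
  have hring : ∀ r : ℝ, 0 < r →
      2*π*c ≤ ∫ θ in Set.Ioo (-π) π, ‖g (circleMap 0 r θ)‖^2 := by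
    intro r hr
    have hper : Function.Periodic (fun θ => ‖g (circleMap 0 r θ)‖^2) (2*π) := by
      intro θ
      simp [periodic_circleMap 0 r θ]
    have hshift := hper.intervalIntegral_add_eq (-π) 0
    rw [← integral_Ioc_eq_integral_Ioo,
      ← intervalIntegral.integral_of_le (by linarith [pi_pos] : -π ≤ π)]
    have hπ : -π + 2*π = π := by ring
    have h0 : (0:ℝ) + 2*π = 2*π := by ring
    rw [hπ, h0] at hshift
    rw [hshift]
    exact circle_bound g hg hr
  -- zero measure case
  by_cases hQ : IntegrableOn Q polarCoord.target
  · -- main case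
    have hcle : ∀ T : ℝ, 0 < T → π * c * T^2 ≤ M := by
      intro T hT
      set S : Set (ℝ × ℝ) := Set.Ioc 0 T ×ˢ Set.Ioo (-π) π with hSdef
      have hS : S ⊆ polarCoord.target := by
        rw [polarCoord_target]
        exact Set.prod_mono_left Set.Ioc_subset_Ioi_self
      have hQS : IntegrableOn Q S := hQ.mono_set hS
      have h1 : ∫ p in S, Q p ≤ M := by
        rw [← hE]
        refine setIntegral_mono_set hQ ?_ (HasSubset.Subset.eventuallyLE hS)
        filter_upwards [ae_restrict_mem polarCoord.open_target.measurableSet] with p hp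
        rw [polarCoord_target] at hp
        have : (0:ℝ) < p.1 := hp.1
        have : (0:ℝ) ≤ ‖g (Complex.polarCoord.symm p)‖^2 := sq_nonneg _
        simp only [Q, smul_eq_mul]
        positivity
      have hQS' : Integrable Q ((volume.restrict (Set.Ioc 0 T)).prod
          (volume.restrict (Set.Ioo (-π) π))) := by
        rw [Measure.prod_restrict]
        rw [Measure.volume_eq_prod] at hQS
        exact hQS
      have h2 : ∫ p in S, Q p
          = ∫ r in Set.Ioc 0 T, ∫ θ in Set.Ioo (-π) π, Q (r, θ) := by
        rw [hSdef, Measure.volume_eq_prod]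
        exact setIntegral_prod Q (by rwa [← Measure.volume_eq_prod])
      have h3 : ∀ r ∈ Set.Ioc (0:ℝ) T,
          2*π*c*r ≤ ∫ θ in Set.Ioo (-π) π, Q (r, θ) := by
        intro r hr
        have : ∫ θ in Set.Ioo (-π) π, Q (r, θ)
            = r * ∫ θ in Set.Ioo (-π) π, ‖g (circleMap 0 r θ)‖^2 := by
          simp only [Q, smul_eq_mul, polar_symm_eq]
          exact integral_const_mul r _
        rw [this]
        have := mul_le_mul_of_nonneg_left (hring r hr.1) hr.1.le
        linarith [this]
      have h4 : ∫ r in Set.Ioc (0:ℝ) T, 2*π*c*r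
          ≤ ∫ r in Set.Ioc (0:ℝ) T, ∫ θ in Set.Ioo (-π) π, Q (r, θ) := by
        refine setIntegral_mono_on ?_ ?_ measurableSet_Ioc h3
        · exact (continuous_const.mul continuous_id).integrableOn_Ioc
        · exact hQS'.integral_prod_left
      have h5 : ∫ r in Set.Ioc (0:ℝ) T, 2*π*c*r = π * c * T^2 := by
        rw [← intervalIntegral.integral_of_le hT.le]
        rw [intervalIntegral.integral_const_mul, integral_id]
        ring
      rw [h5] at h4
      rw [h2] at h1
      linarith
    by_contra hg0
    have hcpos : 0 < c := by
      rcases lt_or_eq_of_le (sq_nonneg ‖g 0‖) with h | h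
      · exact h
      · exact absurd (norm_eq_zero.mp (pow_eq_zero_iff (n := 2) (by norm_num)
          |>.mp h.symm)) hg0
    have hMpos : 0 ≤ M := integral_nonneg fun z => sq_nonneg _
    have hpc' : 0 < π * c := mul_pos Real.pi_pos hcpos
    have harg : 0 < (M+1)/(π*c) := div_pos (by linarith) hpc'
    set T : ℝ := Real.sqrt ((M+1)/(π*c)) with hT
    have hTpos : 0 < T := Real.sqrt_pos.mpr harg
    have hT2 : T^2 = (M+1)/(π*c) := Real.sq_sqrt harg.le
    have := hcle T hTpos
    rw [hT2] at this
    have hpc : π * c ≠ 0 := hpc'.ne'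
    have key : π*c*((M+1)/(π*c)) = M+1 := mul_div_cancel₀ _ hpc
    linarith
  · -- non-integrable case: integral is zero, so M = 0, so g ≡ 0
    have h0 : ∫ p in polarCoord.target, Q p = 0 := integral_undef hQ
    have hM : M = 0 := by rw [← hE, h0]
    have hzero : (fun z : ℂ => ‖g z‖^2) =ᵐ[volume] (fun _ => (0:ℝ)) := by
      exact (integral_eq_zero_iff_of_nonneg (fun z => sq_nonneg _) hi).mp hM
    have heq : (fun z : ℂ => ‖g z‖^2) = fun _ => (0:ℝ) := by
      rw [← Continuous.ae_eq_iff_eq volume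
        (show Continuous (fun z : ℂ => ‖g z‖^2) from (hg.continuous.norm).pow 2) continuous_const]
      exact hzero
    have := congrFun heq 0
    simpa using this

lemma entire_l2_zero (g : ℂ → ℂ) (hg : Differentiable ℂ g)
    (hi : Integrable (fun z : ℂ => ‖g z‖^2)) (w : ℂ) : g w = 0 := by
  have hmp := measurePreserving_add_left (volume : Measure ℂ) w
  have hint : Integrable (fun z : ℂ => ‖g (w + z)‖^2) := by
    have := (hmp.integrable_comp hi.aestronglyMeasurable).mpr hi
    exact this
  have := entire_l2_zero_at (fun z => g (w + z))
    (hg.comp ((differentiable_id.const_add w))) hint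
  simpa using this

end AuxL2

set_option maxHeartbeats 1000000 in
lemma diffC_of_wdb_eq_zero {f : ℂ → ℂ} {z : ℂ} (hd : DifferentiableAt ℝ f z)
    (h : wdb f z = 0) : DifferentiableAt ℂ f z := by
  have hD := hd.hasFDerivAt
  have hpdy : fderiv ℝ f z Complex.I = Complex.I * fderiv ℝ f z 1 := by
    have h2 : pdx f z + Complex.I * pdy f z = 0 := by
      have := h
      unfold wdb at this
      field_simp at this
      linear_combination this
    unfold pdx pdy at h2
    have : Complex.I * (fderiv ℝ f z 1 + Complex.I * fderiv ℝ f z Complex.I) = 0 := by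
      rw [h2]; ring
    rw [mul_add] at this
    have h3 : Complex.I * (Complex.I * fderiv ℝ f z Complex.I)
        = - fderiv ℝ f z Complex.I := by
      rw [← mul_assoc, Complex.I_mul_I]; ring
    rw [h3] at this
    linear_combination -this
  set L : ℂ →L[ℂ] ℂ := (fderiv ℝ f z 1) • (ContinuousLinearMap.id ℂ ℂ) with hL
  have hext : L.restrictScalars ℝ = fderiv ℝ f z := by
    apply ContinuousLinearMap.ext
    intro v
    have hv : v = (v.re : ℝ) • (1:ℂ) + (v.im : ℝ) • Complex.I := by
      simp [Complex.real_smul, Complex.re_add_im]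
    calc (L.restrictScalars ℝ) v = fderiv ℝ f z 1 * v := by
          simp [hL, smul_eq_mul]
      _ = v.re • fderiv ℝ f z 1 + v.im • (Complex.I * fderiv ℝ f z 1) := by
          rw [Complex.real_smul, Complex.real_smul]
          nth_rewrite 1 [← Complex.re_add_im v]
          ring
      _ = fderiv ℝ f z ((v.re : ℝ) • (1:ℂ) + (v.im : ℝ) • Complex.I) := by
          rw [map_add, _root_.map_smul, _root_.map_smul, hpdy]
      _ = fderiv ℝ f z v := by rw [← hv]
  exact (hasFDerivAt_of_restrictScalars ℝ hD hext).differentiableAt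

lemma g_entire (N : ℝ) (ψ : ℂ → ℂ) (hψ : ContDiff ℝ (⊤ : ℕ∞) ψ)
    (hker : ∀ z : ℂ, DNs N ψ z = 0) :
    Differentiable ℂ (fun z : ℂ =>
      (starRingEnd ℂ) (ψ z) * (((1 + Complex.normSq z) ^ (-(N+1)) : ℝ) : ℂ)) := by
  set a : ℝ := -(N+1) with ha
  intro z
  set s : ℝ := 1 + Complex.normSq z with hsdef
  have hs : (0:ℝ) < s := by
    have := Complex.normSq_nonneg z; rw [hsdef]; linarith
  -- derivative of 1 + normSq
  have hre : HasFDerivAt (fun w : ℂ => w.re) (Complex.reCLM : ℂ →L[ℝ] ℝ) z :=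
    Complex.reCLM.hasFDerivAt
  have him : HasFDerivAt (fun w : ℂ => w.im) (Complex.imCLM : ℂ →L[ℝ] ℝ) z :=
    Complex.imCLM.hasFDerivAt
  have hsq := ((hre.mul hre).add (him.mul him)).const_add 1
  set Ls : ℂ →L[ℝ] ℝ :=
    (z.re • (Complex.reCLM : ℂ →L[ℝ] ℝ) + z.re • (Complex.reCLM : ℂ →L[ℝ] ℝ)) +
    (z.im • (Complex.imCLM : ℂ →L[ℝ] ℝ) + z.im • (Complex.imCLM : ℂ →L[ℝ] ℝ)) with hLs
  have hs_der : HasFDerivAt (fun w : ℂ => 1 + Complex.normSq w) Ls z := by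
    simpa [Complex.normSq_apply] using hsq
  have hLs1 : Ls 1 = 2 * z.re := by simp [hLs]; ring
  have hLsI : Ls Complex.I = 2 * z.im := by simp [hLs]; ring
  -- derivative of v = ofReal ((1+normSq)^a)
  have hrpow : HasDerivAt (fun x : ℝ => x ^ a) (a * s ^ (a-1)) s :=
    Real.hasDerivAt_rpow_const (Or.inl hs.ne')
  have hcomp : HasFDerivAt (fun w : ℂ => ((1 + Complex.normSq w) ^ a : ℝ))
      ((a * s ^ (a-1)) • Ls) z := by have := hrpow.comp_hasFDerivAt z hs_der; exact this
  set Dv : ℂ →L[ℝ] ℂ := Complex.ofRealCLM.comp ((a * s ^ (a-1)) • Ls) with hDv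
  have hv_der : HasFDerivAt (fun w : ℂ => (((1 + Complex.normSq w) ^ a : ℝ) : ℂ)) Dv z :=
    Complex.ofRealCLM.hasFDerivAt.comp z hcomp
  -- derivative of χ = conj ∘ ψ
  have hψd : HasFDerivAt ψ (fderiv ℝ ψ z) z :=
    (hψ.differentiable (by simp) z).hasFDerivAt
  set Dχ : ℂ →L[ℝ] ℂ :=
    ((Complex.conjCLE : ℂ ≃L[ℝ] ℂ) : ℂ →L[ℝ] ℂ).comp (fderiv ℝ ψ z) with hDχ
  have hχ_der : HasFDerivAt (fun w : ℂ => (starRingEnd ℂ) (ψ w)) Dχ z := by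
    have := (((Complex.conjCLE : ℂ ≃L[ℝ] ℂ) : ℂ →L[ℝ] ℂ).hasFDerivAt).comp z hψd
    exact this
  -- derivative of g
  have hg_der : HasFDerivAt (fun w : ℂ =>
      (starRingEnd ℂ) (ψ w) * (((1 + Complex.normSq w) ^ a : ℝ) : ℂ))
      ((starRingEnd ℂ) (ψ z) • Dv + (((1 + Complex.normSq z) ^ a : ℝ) : ℂ) • Dχ) z :=
    hχ_der.mul hv_der
  -- evaluations
  have hDv1 : Dv 1 = ((a * s ^ (a-1) * (2 * z.re) : ℝ) : ℂ) := by
    simp [hDv, hLs1]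
  have hDvI : Dv Complex.I = ((a * s ^ (a-1) * (2 * z.im) : ℝ) : ℂ) := by
    simp [hDv, hLsI]
  have hDχ1 : Dχ 1 = (starRingEnd ℂ) (fderiv ℝ ψ z 1) := by simp [hDχ]
  have hDχI : Dχ Complex.I = (starRingEnd ℂ) (fderiv ℝ ψ z Complex.I) := by simp [hDχ]
  -- kernel equation, conjugated
  have hk : (1 + z * (starRingEnd ℂ) z) * wd ψ z
      = ((N:ℂ)+1) * (starRingEnd ℂ) z * ψ z := by
    have := hker z
    unfold DNs at this
    linear_combination -this
  have hkc : ((s:ℝ) : ℂ) * (starRingEnd ℂ) (wd ψ z)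
      = ((N:ℂ)+1) * z * (starRingEnd ℂ) (ψ z) := by
    have h2 := congrArg (starRingEnd ℂ) hk
    simp only [map_mul, map_add, map_one, Complex.conj_conj, Complex.conj_ofReal] at h2
    have hsc : (((s:ℝ)) : ℂ) = 1 + (starRingEnd ℂ) z * z := by
      rw [hsdef]
      push_cast
      rw [← Complex.normSq_eq_conj_mul_self]
    rw [hsc, h2]
  -- wdb g = 0
  have hwdb : wdb (fun w : ℂ =>
      (starRingEnd ℂ) (ψ w) * (((1 + Complex.normSq w) ^ a : ℝ) : ℂ)) z = 0 := by
    unfold wdb pdx pdy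
    rw [hg_der.fderiv]
    simp only [ContinuousLinearMap.add_apply, ContinuousLinearMap.smul_apply,
      hDv1, hDvI, hDχ1, hDχI, smul_eq_mul]
    -- reduce to multiplied-by-s identity
    have hsC : ((s:ℝ) : ℂ) ≠ 0 := by
      simpa using hs.ne'
    apply mul_left_cancel₀ hsC
    rw [mul_zero]
    have hzsum : (z.re : ℂ) + (z.im : ℂ) * Complex.I = z := Complex.re_add_im z
    have hwconj : (starRingEnd ℂ) (wd ψ z)
        = ((starRingEnd ℂ) (fderiv ℝ ψ z 1)
           + Complex.I * (starRingEnd ℂ) (fderiv ℝ ψ z Complex.I)) / 2 := by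
      unfold wd pdx pdy
      simp only [map_div₀, map_sub, map_mul, Complex.conj_I, map_ofNat]
      push_cast
      ring
    have hpow : (s:ℝ) ^ (a-1) * s = s ^ a := by
      rw [← Real.rpow_add_one hs.ne' (a-1)]
      ring_nf
    -- now pure algebra
    have key : ((s:ℝ) : ℂ) * (((starRingEnd ℂ) (fderiv ℝ ψ z 1)
           + Complex.I * (starRingEnd ℂ) (fderiv ℝ ψ z Complex.I)) / 2)
        = ((N:ℂ)+1) * z * (starRingEnd ℂ) (ψ z) := by
      rw [← hwconj]; exact hkc
    calc ((s:ℝ) : ℂ) * ((((starRingEnd ℂ) (ψ z) * ((a * s ^ (a-1) * (2*z.re) : ℝ) : ℂ)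
            + (((1 + Complex.normSq z) ^ a : ℝ) : ℂ) * (starRingEnd ℂ) (fderiv ℝ ψ z 1))
          + Complex.I * ((starRingEnd ℂ) (ψ z) * ((a * s ^ (a-1) * (2*z.im) : ℝ) : ℂ)
            + (((1 + Complex.normSq z) ^ a : ℝ) : ℂ)
              * (starRingEnd ℂ) (fderiv ℝ ψ z Complex.I))) / 2)
        = (starRingEnd ℂ) (ψ z) * ((a:ℂ) * ((s ^ (a-1) * s : ℝ) : ℂ))
            * (((z.re:ℝ):ℂ) + ((z.im:ℝ):ℂ) * Complex.I)
          + (((s ^ a : ℝ)) : ℂ) * (((s:ℝ):ℂ)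
            * (((starRingEnd ℂ) (fderiv ℝ ψ z 1)
               + Complex.I * (starRingEnd ℂ) (fderiv ℝ ψ z Complex.I)) / 2)) := by
          rw [← hsdef]
          push_cast
          ring
      _ = 0 := by
          rw [hpow, hzsum, key]
          push_cast [ha]
          ring
  exact diffC_of_wdb_eq_zero hg_der.differentiableAt hwdb

set_option maxHeartbeats 1000000 in
/-- for N ≥ 0, every smooth solution of D_N*ψ = 0 on ℂ which is
normalizable for the round-sphere norm ∫|ψ|²(1+|z|²)^{-2}dA < ∞ vanishes
identically (dim Ker D* = 0 for positive flux on the sphere). -/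
theorem no_normalizable_antiground_states
    (N : ℝ) (hN : 0 ≤ N) (ψ : ℂ → ℂ) (hψ : ContDiff ℝ (⊤ : ℕ∞) ψ)
    (hker : ∀ z : ℂ, DNs N ψ z = 0)
    (hnorm : Integrable (fun z : ℂ =>
      ‖ψ z‖^2 * (1 + Complex.normSq z) ^ (-2 : ℝ))) :
    ∀ z : ℂ, ψ z = 0 := by
  have hG := g_entire N ψ hψ hker
  set g : ℂ → ℂ := fun z : ℂ =>
    (starRingEnd ℂ) (ψ z) * (((1 + Complex.normSq z) ^ (-(N+1)) : ℝ) : ℂ) with hgdef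
  have hint : Integrable (fun z : ℂ => ‖g z‖^2) := by
    refine hnorm.mono ((hG.continuous.norm.pow 2).aestronglyMeasurable) ?_
    filter_upwards with z
    have hns := Complex.normSq_nonneg z
    have hs : (0:ℝ) < 1 + Complex.normSq z := by linarith
    have hs1 : (1:ℝ) ≤ 1 + Complex.normSq z := by linarith
    have h1 : ‖g z‖^2
        = ‖ψ z‖^2 * ((1 + Complex.normSq z) ^ (-(N+1) + -(N+1)) : ℝ) := by
      rw [hgdef]
      simp only [norm_mul, Complex.norm_conj, Complex.norm_real, Real.norm_eq_abs]
      rw [abs_of_pos (Real.rpow_pos_of_pos hs _)]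
      rw [mul_pow]
      congr 1
      rw [sq, ← Real.rpow_add hs]
    have hb : ‖ψ z‖^2 * ((1 + Complex.normSq z) ^ (-(N+1) + -(N+1)) : ℝ)
        ≤ ‖ψ z‖^2 * ((1 + Complex.normSq z) ^ (-2 : ℝ)) :=
      mul_le_mul_of_nonneg_left
        (Real.rpow_le_rpow_of_exponent_le hs1 (by linarith)) (by positivity)
    have hnn1 : (0:ℝ) ≤ ‖g z‖^2 := sq_nonneg _
    have hnn2 : (0:ℝ) ≤ ‖ψ z‖^2 * (1 + Complex.normSq z) ^ (-2:ℝ) := by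
      positivity
    rw [Real.norm_eq_abs, Real.norm_eq_abs, _root_.abs_of_nonneg hnn1,
      _root_.abs_of_nonneg hnn2, h1]
    exact hb
  intro w
  have hgw : g w = 0 := entire_l2_zero g hG hint w
  have hnsw := Complex.normSq_nonneg w
  have hsw : (0:ℝ) < 1 + Complex.normSq w := by linarith
  have hvne : (((1 + Complex.normSq w) ^ (-(N+1)) : ℝ) : ℂ) ≠ 0 := by
    rw [Complex.ofReal_ne_zero]
    exact (Real.rpow_pos_of_pos hsw _).ne'
  rw [hgdef] at hgw
  rcases mul_eq_zero.mp hgw with h | h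
  · simpa using h
  · exact absurd h hvne
end
end
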